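/- Let n ≥ 1. The multiplicative semigroup Q_n of all n×n real matrices each of whose row sums and column sums equals 1 is isomorphic, as a semigroup, to the multiplicative semigroup M_{n-1}(ℝ) of all (n-1)×(n-1) real matrices. -/

import Mathlib

namespace NilSg

variable {M : Type*}

/-- `T ⊆ M` is closed under multiplication. -/
def IsSubsg [Mul M] (T : Set M) : Prop :=
  ∀ ⦃a⦄, a ∈ T → ∀ ⦃b⦄, b ∈ T → a * b ∈ T

/-- Every product of exactly `k` elements of `T` equals `z`
(such products are the products of nonempty lists `a :: l` of elements of `T`). -/
def ProdEq [Mul M] (z : M) (T : Set M) (k : ℕ) : Prop :=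
  ∀ (a : M) (l : List M), a ∈ T → (∀ x ∈ l, x ∈ T) → l.length + 1 = k →
    l.foldl (· * ·) a = z

/-- `T` is a nilpotent subsemigroup with respect to the zero element `z`. -/
def IsNilSubsg [Mul M] (z : M) (T : Set M) : Prop :=
  IsSubsg T ∧ ∃ k, 0 < k ∧ ProdEq z T k

/-- The nilpotency class of `T`: the minimal `k ≥ 1` such that every product of `k`
elements of `T` equals `z`. -/
noncomputable def nilClass [Mul M] (z : M) (T : Set M) : ℕ :=
  sInf {k | 0 < k ∧ ProdEq z T k}

/-- `T` is a nilpotent subsemigroup of `S` (with zero `z`). -/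
def NilIn [Mul M] (z : M) (S : Set M) (T : Set M) : Prop :=
  T ⊆ S ∧ IsNilSubsg z T

/-- `T` is a nilpotent subsemigroup of `S` (with zero `z`) of nilpotency class at most `k`. -/
def NilLe [Mul M] (z : M) (S : Set M) (k : ℕ) (T : Set M) : Prop :=
  T ⊆ S ∧ IsNilSubsg z T ∧ nilClass z T ≤ k

/-- `Ω n`: the semigroup of `n × n` real matrices with nonnegative entries. -/
def Omega (n : ℕ) : Set (Matrix (Fin n) (Fin n) ℝ) :=
  {A | ∀ i j, 0 ≤ A i j}

/-- `Q n`: the semigroup of `n × n` real matrices all of whose row sums and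
column sums equal `1`. -/
def Qset (n : ℕ) : Set (Matrix (Fin n) (Fin n) ℝ) :=
  {A | (∀ i, ∑ j, A i j = 1) ∧ (∀ j, ∑ i, A i j = 1)}

/-- `D n`: the semigroup of `n × n` doubly stochastic real matrices. -/
def Dset (n : ℕ) : Set (Matrix (Fin n) (Fin n) ℝ) :=
  {A | (∀ i j, 0 ≤ A i j) ∧ (∀ i, ∑ j, A i j = 1) ∧ (∀ j, ∑ i, A i j = 1)}

/-- The matrix all of whose entries equal `1/n`: the zero element of `Q n` and `D n`. -/
noncomputable def On (n : ℕ) : Matrix (Fin n) (Fin n) ℝ :=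
  Matrix.of fun _ _ => (n : ℝ)⁻¹

/-- The hyperplane `V` of all vectors whose coordinates sum to `0`. -/
def Vsub (n : ℕ) : Submodule ℝ (Fin n → ℝ) where
  carrier := {x | ∑ i, x i = 0}
  add_mem' := by
    intro a b ha hb
    simp only [Set.mem_setOf_eq, Pi.add_apply] at *
    simp [Finset.sum_add_distrib, ha, hb]
  zero_mem' := by simp
  smul_mem' := by
    intro c x hx
    simp only [Set.mem_setOf_eq, Pi.smul_apply, smul_eq_mul] at *
    simp [← Finset.mul_sum, hx]

noncomputable def fmap (m : ℕ) (A : Matrix (Fin (m + 1)) (Fin (m + 1)) ℝ) :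
    Matrix (Fin m) (Fin m) ℝ :=
  Matrix.of fun i j => A i.castSucc j.castSucc - A i.castSucc (Fin.last m)

noncomputable def tvec (m : ℕ) (B : Matrix (Fin m) (Fin m) ℝ) (i : Fin m) : ℝ :=
  (1 - ∑ j, B i j) / (m + 1)

noncomputable def gmap (m : ℕ) (B : Matrix (Fin m) (Fin m) ℝ) :
    Matrix (Fin (m + 1)) (Fin (m + 1)) ℝ :=
  Matrix.of fun i j =>
    Fin.lastCases
      (Fin.lastCases (1 - ∑ i', tvec m B i')
        (fun j' => 1 - ∑ i', (B i' j' + tvec m B i')) j)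
      (fun i' => Fin.lastCases (tvec m B i')
        (fun j' => B i' j' + tvec m B i') j) i

lemma gmap_cc (m : ℕ) (B : Matrix (Fin m) (Fin m) ℝ) (i j : Fin m) :
    gmap m B i.castSucc j.castSucc = B i j + tvec m B i := by
  simp [gmap]

lemma gmap_cl (m : ℕ) (B : Matrix (Fin m) (Fin m) ℝ) (i : Fin m) :
    gmap m B i.castSucc (Fin.last m) = tvec m B i := by
  simp [gmap]

lemma gmap_lc (m : ℕ) (B : Matrix (Fin m) (Fin m) ℝ) (j : Fin m) :
    gmap m B (Fin.last m) j.castSucc = 1 - ∑ i', (B i' j + tvec m B i') := by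
  simp [gmap]

lemma gmap_ll (m : ℕ) (B : Matrix (Fin m) (Fin m) ℝ) :
    gmap m B (Fin.last m) (Fin.last m) = 1 - ∑ i', tvec m B i' := by
  simp [gmap]

lemma tvec_spec (m : ℕ) (B : Matrix (Fin m) (Fin m) ℝ) (i : Fin m) :
    ((m : ℝ) + 1) * tvec m B i = 1 - ∑ j, B i j := by
  have h : ((m : ℝ) + 1) ≠ 0 := by positivity
  unfold tvec
  field_simp

lemma gmap_mem (m : ℕ) (B : Matrix (Fin m) (Fin m) ℝ) : gmap m B ∈ Qset (m + 1) := by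
  constructor
  · intro i
    induction i using Fin.lastCases with
    | last =>
      rw [Fin.sum_univ_castSucc, gmap_ll]
      simp only [gmap_lc]
      have h1 : ∀ i' : Fin m, ((m : ℝ) + 1) * tvec m B i' = 1 - ∑ j, B i' j :=
        tvec_spec m B
      have h2 : ((m : ℝ) + 1) * ∑ i', tvec m B i' = (m : ℝ) - ∑ i', ∑ j, B i' j := by
        rw [Finset.mul_sum]
        simp_rw [h1]
        rw [Finset.sum_sub_distrib]
        simp
      have h3 : ∑ j' : Fin m, (1 - ∑ i', (B i' j' + tvec m B i'))
          = (m : ℝ) - ∑ j', ∑ i', (B i' j' + tvec m B i') := by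
        rw [Finset.sum_sub_distrib]; simp
      rw [h3]
      have h4 : ∑ j' : Fin m, ∑ i', (B i' j' + tvec m B i')
          = (∑ i', ∑ j', B i' j') + (m : ℝ) * ∑ i', tvec m B i' := by
        rw [Finset.sum_comm]
        simp_rw [Finset.sum_add_distrib]
        congr 1
        rw [Finset.mul_sum]
        simp [mul_comm]
      rw [h4]
      linarith [h2]
    | cast i' =>
      rw [Fin.sum_univ_castSucc, gmap_cl]
      simp only [gmap_cc]
      rw [Finset.sum_add_distrib]
      have := tvec_spec m B i'
      simp only [Finset.sum_const, Finset.card_univ, Fintype.card_fin, nsmul_eq_mul]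
      linarith
  · intro j
    induction j using Fin.lastCases with
    | last =>
      rw [Fin.sum_univ_castSucc, gmap_ll]
      simp only [gmap_cl]
      ring
    | cast j' =>
      rw [Fin.sum_univ_castSucc, gmap_lc]
      simp only [gmap_cc]
      ring

lemma fmap_gmap (m : ℕ) (B : Matrix (Fin m) (Fin m) ℝ) : fmap m (gmap m B) = B := by
  ext i j
  simp [fmap, gmap_cc, gmap_cl]

lemma tvec_fmap (m : ℕ) (A : Matrix (Fin (m + 1)) (Fin (m + 1)) ℝ) (hA : A ∈ Qset (m + 1))
    (i : Fin m) : tvec m (fmap m A) i = A i.castSucc (Fin.last m) := by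
  have hrow := hA.1 i.castSucc
  rw [Fin.sum_univ_castSucc] at hrow
  have h : ((m : ℝ) + 1) * tvec m (fmap m A) i = 1 - ∑ j, fmap m A i j :=
    tvec_spec m (fmap m A) i
  have h2 : ∑ j : Fin m, fmap m A i j
      = (∑ j : Fin m, A i.castSucc j.castSucc) - (m : ℝ) * A i.castSucc (Fin.last m) := by
    simp only [fmap, Matrix.of_apply]
    rw [Finset.sum_sub_distrib]
    simp
  have hm : ((m : ℝ) + 1) ≠ 0 := by positivity
  have : ((m : ℝ) + 1) * tvec m (fmap m A) i = ((m : ℝ) + 1) * A i.castSucc (Fin.last m) := by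
    rw [h, h2]; linarith
  exact mul_left_cancel₀ hm this

lemma gmap_fmap (m : ℕ) (A : Matrix (Fin (m + 1)) (Fin (m + 1)) ℝ) (hA : A ∈ Qset (m + 1)) :
    gmap m (fmap m A) = A := by
  have ht := tvec_fmap m A hA
  ext i j
  induction i using Fin.lastCases with
  | last =>
    induction j using Fin.lastCases with
    | last =>
      rw [gmap_ll]
      simp_rw [ht]
      have hcol := hA.2 (Fin.last m)
      rw [Fin.sum_univ_castSucc] at hcol
      linarith
    | cast j' =>
      rw [gmap_lc]
      have hcol := hA.2 j'.castSucc
      rw [Fin.sum_univ_castSucc] at hcol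
      have h : ∑ i', (fmap m A i' j' + tvec m (fmap m A) i')
          = ∑ i' : Fin m, A i'.castSucc j'.castSucc := by
        apply Finset.sum_congr rfl
        intro i' _
        rw [ht]
        simp [fmap]
      rw [h]
      linarith
  | cast i' =>
    induction j using Fin.lastCases with
    | last => rw [gmap_cl, ht]
    | cast j' =>
      rw [gmap_cc, ht]
      simp [fmap]

lemma fmap_mul (m : ℕ) (A B : Matrix (Fin (m + 1)) (Fin (m + 1)) ℝ)
    (hB : B ∈ Qset (m + 1)) : fmap m (A * B) = fmap m A * fmap m B := by
  ext i j
  have hb : ∑ k : Fin (m + 1), (B k j.castSucc - B k (Fin.last m)) = 0 := by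
    rw [Finset.sum_sub_distrib, hB.2 j.castSucc, hB.2 (Fin.last m)]
    ring
  rw [Fin.sum_univ_castSucc] at hb
  simp only [fmap, Matrix.of_apply, Matrix.mul_apply]
  rw [← Finset.sum_sub_distrib]
  simp_rw [← mul_sub, sub_mul]
  rw [Fin.sum_univ_castSucc, Finset.sum_sub_distrib, ← Finset.mul_sum]
  have : B (Fin.last m) j.castSucc - B (Fin.last m) (Fin.last m)
      = -∑ k' : Fin m, (B k'.castSucc j.castSucc - B k'.castSucc (Fin.last m)) := by
    linarith
  rw [this]
  ring

/-- The multiplicative semigroup `Q_n` of all `n × n` real matrices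
whose row and column sums all equal `1` is isomorphic, as a semigroup, to the
multiplicative semigroup of all `(n-1) × (n-1)` real matrices. -/
theorem stmt11 (n : ℕ) (hn : 1 ≤ n) :
    ∃ f : Matrix (Fin n) (Fin n) ℝ → Matrix (Fin (n - 1)) (Fin (n - 1)) ℝ,
      Set.BijOn f (Qset n) Set.univ ∧
        ∀ A ∈ Qset n, ∀ B ∈ Qset n, f (A * B) = f A * f B := by
  obtain ⟨m, rfl⟩ : ∃ m, n = m + 1 := ⟨n - 1, (Nat.succ_pred_eq_of_pos hn).symm⟩
  refine ⟨fmap m, ?_, fun A _ B hB => fmap_mul m A B hB⟩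
  have hinv : Set.InvOn (gmap m) (fmap m) (Qset (m + 1)) Set.univ :=
    ⟨fun A hA => gmap_fmap m A hA, fun B _ => fmap_gmap m B⟩
  exact hinv.bijOn (Set.mapsTo_univ _ _) (fun B _ => gmap_mem m B)

end NilSg
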